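/- For any prime p, positive integers a and n with p ∤ n and p ∤ (n+1), the following identity of truncated geometric-type sums holds in Z_p: -n·∑_{k=1}^{p^a-1} B_k(x)/(-n)^k ≡ ∑_{k=1}^{p^a-1} B_k(x)·x/(-n-1)^k - x·∑_{l=1}^{p^a-1} B_l(x)/(-1)^l (mod p·Z_p[x]), i.e., the inductive step relation relating the sum at n+1 to the sum at n. -/

import Mathlib

/-- Stirling numbers of the second kind. -/
def stirling2 : ℕ → ℕ → ℕ
  | 0, 0 => 1
  | 0, _ + 1 => 0
  | _ + 1, 0 => 0
  | n + 1, k + 1 => (k + 1) * stirling2 n (k + 1) + stirling2 n k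

/-- The Bell polynomial `B_n(x) = ∑_{k=0}^n S(n,k) x^k`. -/
noncomputable def bellPoly (R : Type*) [CommRing R] (n : ℕ) : Polynomial R :=
  ∑ k ∈ Finset.range (n + 1), Polynomial.C (stirling2 n k : R) * Polynomial.X ^ k

open Finset Polynomial

lemma stirling2_succ_zero (n : ℕ) : stirling2 (n+1) 0 = 0 := rfl
lemma stirling2_succ_succ (n k : ℕ) :
    stirling2 (n+1) (k+1) = (k + 1) * stirling2 n (k + 1) + stirling2 n k := rfl

lemma stirling2_eq_zero_of_lt : ∀ {n k : ℕ}, n < k → stirling2 n k = 0 := by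
  intro n
  induction n with
  | zero => intro k hk; match k, hk with
            | k+1, _ => rfl
  | succ n ih =>
    intro k hk
    match k, hk with
    | k+1, hk =>
      rw [stirling2_succ_succ, ih (by omega), ih (by omega)]
      simp

lemma sum_choose_shift (n : ℕ) (g : ℕ → ℕ) :
    ∑ j ∈ range (n+2), (n+1).choose j * g j
      = ∑ j ∈ range (n+1), n.choose j * g j + ∑ j ∈ range (n+1), n.choose j * g (j+1) := by
  rw [Finset.sum_range_succ' (fun j => (n+1).choose j * g j)]
  simp only [Nat.choose_succ_succ, add_mul, Nat.choose_zero_right]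
  rw [Finset.sum_add_distrib]
  rw [Finset.sum_range_succ' (fun j => n.choose j * g j)]
  have h1 : ∑ x ∈ range (n+1), n.choose (x+1) * g (x+1)
      = ∑ x ∈ range n, n.choose (x+1) * g (x+1) := by
    rw [Finset.sum_range_succ, Nat.choose_succ_self, zero_mul, add_zero]
  simp only [Nat.succ_eq_add_one, Nat.choose_zero_right, one_mul] at *
  omega

lemma choose_mul_stirling2 (n : ℕ) : ∀ l : ℕ,
    ∑ j ∈ range (n+1), n.choose j * stirling2 j l = stirling2 (n+1) (l+1) := by
  induction n with
  | zero =>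
    intro l
    rw [zero_add, Finset.sum_range_one, Nat.choose_self, one_mul]
    cases l with
    | zero => rfl
    | succ l => rw [stirling2_succ_succ]; rfl
  | succ n ih =>
    intro l
    rw [show n+1+1 = n+2 from rfl, sum_choose_shift n (fun j => stirling2 j l), ih l]
    cases l with
    | zero =>
      have : ∑ j ∈ range (n+1), n.choose j * stirling2 (j+1) 0 = 0 := by
        apply Finset.sum_eq_zero; intro j _; rw [stirling2_succ_zero, mul_zero]
      rw [this, add_zero, show n+2 = (n+1)+1 from rfl, stirling2_succ_succ (n+1) 0,
        stirling2_succ_zero, add_zero, zero_add, one_mul]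
    | succ l =>
      have : ∑ j ∈ range (n+1), n.choose j * stirling2 (j+1) (l+1)
          = (l+1) * (∑ j ∈ range (n+1), n.choose j * stirling2 j (l+1))
            + ∑ j ∈ range (n+1), n.choose j * stirling2 j l := by
        rw [Finset.mul_sum, ← Finset.sum_add_distrib]
        apply Finset.sum_congr rfl; intro j _
        rw [stirling2_succ_succ]; ring
      rw [this, ih (l+1), ih l, show n+2 = (n+1)+1 from rfl, stirling2_succ_succ (n+1) (l+1)]
      ring



lemma bellPoly_eq_sum_ext (R : Type*) [CommRing R] (j m : ℕ) (h : j ≤ m) :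
    bellPoly R j = ∑ l ∈ range (m+1), C (stirling2 j l : R) * X ^ l := by
  rw [bellPoly]
  apply Finset.sum_subset
  · exact Finset.range_subset_range.2 (by omega)
  · intro l _ hl
    rw [stirling2_eq_zero_of_lt (by simp at hl; omega)]
    simp

lemma bellPoly_succ (R : Type*) [CommRing R] (k : ℕ) :
    bellPoly R (k+1) = X * ∑ j ∈ range (k+1), C (k.choose j : R) * bellPoly R j := by
  have : ∑ j ∈ range (k+1), C (k.choose j : R) * bellPoly R j
      = ∑ l ∈ range (k+1), C (stirling2 (k+1) (l+1) : R) * X ^ l := by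
    calc ∑ j ∈ range (k+1), C (k.choose j : R) * bellPoly R j
        = ∑ j ∈ range (k+1), ∑ l ∈ range (k+1),
            C ((k.choose j * stirling2 j l : ℕ) : R) * X ^ l := by
          apply Finset.sum_congr rfl; intro j hj
          rw [bellPoly_eq_sum_ext R j k (by simp at hj; omega), Finset.mul_sum]
          apply Finset.sum_congr rfl; intro l _
          push_cast
          rw [map_mul]; ring
      _ = ∑ l ∈ range (k+1), ∑ j ∈ range (k+1),
            C ((k.choose j * stirling2 j l : ℕ) : R) * X ^ l := Finset.sum_comm
      _ = ∑ l ∈ range (k+1), C (stirling2 (k+1) (l+1) : R) * X ^ l := by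
          apply Finset.sum_congr rfl; intro l _
          rw [← Finset.sum_mul, ← choose_mul_stirling2 k l]
          push_cast
          rw [map_sum]
  rw [this, Finset.mul_sum, bellPoly, Finset.sum_range_succ' (fun l => C (stirling2 (k+1) l : R) * X ^ l)]
  rw [stirling2_succ_zero]
  push_cast
  simp only [map_zero, zero_mul, add_zero]
  apply Finset.sum_congr rfl; intro l _
  ring

lemma telescope (R : Type*) [CommRing R] (t : R) (j : ℕ) : ∀ N : ℕ,
    (1 - t) * ∑ k ∈ Icc (j+1) N, (k.choose (j+1) : R) * t^k
      = t * ∑ k ∈ Icc j N, (k.choose j : R) * t^k - ((N+1).choose (j+1) : R) * t^(N+1) := by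
  intro N
  induction N with
  | zero =>
    cases j with
    | zero => simp
    | succ j =>
      rw [Finset.Icc_eq_empty (by omega), Finset.Icc_eq_empty (by omega),
        Nat.choose_eq_zero_of_lt (by omega)]
      simp
  | succ N ih =>
    by_cases h : j + 1 ≤ N + 1
    · rw [Finset.sum_Icc_succ_top h, Finset.sum_Icc_succ_top (by omega : j ≤ N + 1),
        mul_add, mul_add, ih]
      push_cast [Nat.choose_succ_succ (N+1) j]
      ring
    · have hj : N + 1 ≤ j := by omega
      rw [Finset.Icc_eq_empty (by omega)]
      rcases eq_or_lt_of_le hj with rfl | hlt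
      · rw [Finset.Icc_self, Finset.sum_singleton, Nat.choose_self, Nat.choose_self]
        push_cast
        ring
      · rw [Finset.Icc_eq_empty (by omega), Nat.choose_eq_zero_of_lt (by omega)]
        simp

lemma cast_choose_pow_zero (p : ℕ) [Fact p.Prime] (a j : ℕ) (h0 : j ≠ 0) (h1 : j < p^a) :
    (((p^a).choose j : ℕ) : ZMod p) = 0 := by
  rw [ZMod.natCast_eq_zero_iff]
  exact Nat.Prime.dvd_choose_pow (Fact.out) h0 (by omega)

lemma zmod_pow_pred (p : ℕ) [Fact p.Prime] (a : ℕ) (u : ZMod p) (hu : u ≠ 0) :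
    u ^ (p ^ a - 1) = 1 := by
  have hpos : 0 < p ^ a := pow_pos (Nat.Prime.pos Fact.out) a
  have h1 : u ^ (p ^ a - 1) * u = u := by
    rw [← pow_succ, show p ^ a - 1 + 1 = p ^ a by omega, ZMod.pow_card_pow]
  have := mul_right_cancel₀ hu (h1.trans (one_mul u).symm)
  exact this

lemma cast_choose_pred (p : ℕ) [Fact p.Prime] (a : ℕ) (ha : 0 < a) :
    ∀ j : ℕ, j ≤ p^a - 1 → (((p^a - 1).choose j : ℕ) : ZMod p) = (-1)^j := by
  have hpos : 0 < p ^ a := pow_pos (Nat.Prime.pos Fact.out) a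
  intro j
  induction j with
  | zero => simp
  | succ j ih =>
    intro hj
    have h0 : (((p^a).choose (j+1) : ℕ) : ZMod p) = 0 :=
      cast_choose_pow_zero p a (j+1) (by omega) (by omega)
    have hps : p ^ a = (p ^ a - 1) + 1 := by omega
    rw [hps, Nat.choose_succ_succ] at h0
    push_cast at h0
    rw [ih (by omega)] at h0
    have : (((p ^ a - 1).choose (j + 1) : ℕ) : ZMod p) = -(-1)^j := by linear_combination h0
    rw [this, pow_succ]
    ring

lemma H_eq (p : ℕ) [Fact p.Prime] (a : ℕ) (ha : 0 < a) (t : ZMod p)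
    (ht0 : t ≠ 0) (ht1 : t ≠ 1) :
    ∀ j : ℕ, j ≤ p^a - 1 →
      ∑ k ∈ Icc j (p^a - 1), (k.choose j : ZMod p) * t^k = (t * (1-t)⁻¹)^j := by
  have hpos : 0 < p ^ a := pow_pos (Nat.Prime.pos Fact.out) a
  have h1t : (1 : ZMod p) - t ≠ 0 := sub_ne_zero.2 (Ne.symm ht1)
  intro j
  induction j with
  | zero =>
    intro _
    have : Icc 0 (p^a - 1) = range (p^a) := by
      rw [Finset.range_eq_Ico, ← Finset.Ico_add_one_right_eq_Icc, show p^a - 1 + 1 = p ^ a by omega]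
    rw [this, pow_zero]
    simp only [Nat.choose_zero_right, Nat.cast_one, one_mul]
    rw [geom_sum_eq ht1, ZMod.pow_card_pow, div_self (sub_ne_zero.2 ht1)]
  | succ j ih =>
    intro hj
    have tel := telescope (ZMod p) t j (p^a - 1)
    rw [show p ^ a - 1 + 1 = p ^ a by omega,
      cast_choose_pow_zero p a (j+1) (by omega) (by omega), zero_mul, sub_zero,
      ih (by omega)] at tel
    have : (∑ k ∈ Icc (j+1) (p^a - 1), (k.choose (j+1) : ZMod p) * t^k)
        = (1-t)⁻¹ * (t * (t * (1-t)⁻¹)^j) := by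
      field_simp at tel ⊢
      linear_combination tel
    rw [this, pow_succ]
    ring

lemma triangle_swap {M : Type*} [AddCommMonoid M] (m : ℕ) (F : ℕ → ℕ → M) :
    ∑ i ∈ range m, ∑ j ∈ range (i+1), F i j = ∑ j ∈ range m, ∑ i ∈ Ico j m, F i j := by
  induction m with
  | zero => simp
  | succ m ih =>
    rw [Finset.sum_range_succ, ih]
    have : ∀ j ∈ range (m+1), ∑ i ∈ Ico j (m+1), F i j
        = ∑ i ∈ Ico j m, F i j + F m j := by
      intro j hj
      exact Finset.sum_Ico_succ_top (by simp at hj; omega) _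
    rw [Finset.sum_congr rfl this, Finset.sum_add_distrib, Finset.sum_range_succ
      (fun j => ∑ i ∈ Ico j m, F i j)]
    simp [Finset.Ico_self]

lemma main_zmod (p : ℕ) [Fact p.Prime] (a : ℕ) (ha : 0 < a) (N : ZMod p)
    (hN : N ≠ 0) (hN1 : N + 1 ≠ 0) :
    C (-N) * (∑ k ∈ Icc 1 (p^a - 1), C (((-N)^k)⁻¹) * bellPoly (ZMod p) k)
      = (∑ k ∈ Icc 1 (p^a - 1), bellPoly (ZMod p) k * X * C (((-N - 1)^k)⁻¹))
        - X * ∑ l ∈ Icc 1 (p^a - 1), C (((-1 : ZMod p)^l)⁻¹) * bellPoly (ZMod p) l := by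
  have hp2 : 2 ≤ p := (Fact.out : p.Prime).two_le
  have hm1 : 1 ≤ p ^ a - 1 := by
    have : p ≤ p ^ a := Nat.le_self_pow (by omega) p
    omega
  set m := p ^ a - 1 with hm
  set t : ZMod p := (-N)⁻¹ with htdef
  set s : ZMod p := (-N - 1)⁻¹ with hsdef
  have hNneg : (-N : ZMod p) ≠ 0 := neg_ne_zero.2 hN
  have hN1neg : (-N - 1 : ZMod p) ≠ 0 := by
    intro h
    apply hN1
    linear_combination -h
  have ht0 : t ≠ 0 := inv_ne_zero hNneg
  have htN : t * (-N) = 1 := inv_mul_cancel₀ hNneg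
  have ht1 : t ≠ 1 := by
    intro h
    rw [h, one_mul] at htN
    exact hN1 (by linear_combination -htN)
  have h1t : (1 : ZMod p) - t = (-N - 1) * t := by
    have : (-N) * t = 1 := by rw [mul_comm]; exact htN
    linear_combination -this
  have hs : t * (1 - t)⁻¹ = s := by
    rw [h1t, mul_inv, hsdef]
    field_simp
  have hs0 : s ≠ 0 := inv_ne_zero hN1neg
  have ht_pred : t ^ m = 1 := zmod_pow_pred p a t ht0
  have hs_pred : s ^ m = 1 := zmod_pow_pred p a s hs0
  have hneg1_pred : (-1 : ZMod p) ^ m = 1 :=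
    zmod_pow_pred p a (-1) (neg_ne_zero.2 one_ne_zero)
  set g : ℕ → Polynomial (ZMod p) :=
    fun k => C (s^k - (-1:ZMod p)^k) * bellPoly (ZMod p) k with hg
  -- inner scalar sums
  have hinner : ∀ j ∈ range m, ∑ i ∈ Ico j m, ((i.choose j : ZMod p) * t^i)
      = s^j - (-1:ZMod p)^j := by
    intro j hj
    have hjm : j ≤ m := by simp at hj; omega
    have hsplit : ∑ i ∈ Icc j m, ((i.choose j : ZMod p) * t^i)
        = ∑ i ∈ Ico j m, ((i.choose j : ZMod p) * t^i) + (m.choose j : ZMod p) * t^m := by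
      rw [← Finset.Ico_add_one_right_eq_Icc]
      exact Finset.sum_Ico_succ_top (by omega) _
    have hH : ∑ i ∈ Icc j m, ((i.choose j : ZMod p) * t^i) = s^j := by
      rw [H_eq p a ha t ht0 ht1 j hjm, hs]
    rw [hH, cast_choose_pred p a ha j hjm, ht_pred, mul_one] at hsplit
    linear_combination -hsplit
  -- Step A : LHS
  have stepA : C (-N) * (∑ k ∈ Icc 1 m, C (((-N)^k)⁻¹) * bellPoly (ZMod p) k)
      = X * ∑ j ∈ range m, g j := by
    have e1 : ∑ k ∈ Icc 1 m, C (((-N)^k)⁻¹) * bellPoly (ZMod p) k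
        = ∑ i ∈ range m, C (t^(i+1)) * bellPoly (ZMod p) (i+1) := by
      rw [← Finset.Ico_add_one_right_eq_Icc, Finset.sum_Ico_eq_sum_range]
      apply Finset.sum_congr rfl
      intro i _
      rw [show 1 + i = i + 1 by omega, ← inv_pow]
    have e2 : ∑ i ∈ range m, C (t^(i+1)) * bellPoly (ZMod p) (i+1)
        = X * ∑ i ∈ range m, ∑ j ∈ range (i+1),
            C (t^(i+1) * (i.choose j : ZMod p)) * bellPoly (ZMod p) j := by
      rw [Finset.mul_sum]
      apply Finset.sum_congr rfl
      intro i _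
      rw [bellPoly_succ, Finset.mul_sum, Finset.mul_sum, Finset.mul_sum]
      apply Finset.sum_congr rfl
      intro j _
      rw [map_mul]
      ring
    have e3 : ∑ i ∈ range m, ∑ j ∈ range (i+1),
            C (t^(i+1) * (i.choose j : ZMod p)) * bellPoly (ZMod p) j
        = ∑ j ∈ range m, (C t * g j) := by
      rw [triangle_swap m (fun i j => C (t^(i+1) * (i.choose j : ZMod p)) * bellPoly (ZMod p) j)]
      apply Finset.sum_congr rfl
      intro j hj
      rw [← Finset.sum_mul]
      have : ∑ i ∈ Ico j m, C (t^(i+1) * (i.choose j : ZMod p))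
          = C (t * (s^j - (-1:ZMod p)^j)) := by
        rw [← map_sum]
        congr 1
        rw [← hinner j hj, Finset.mul_sum]
        apply Finset.sum_congr rfl
        intro i _
        rw [pow_succ]
        ring
      rw [this, hg, map_mul]
      ring
    rw [e1, e2, e3, Finset.mul_sum, Finset.mul_sum, Finset.mul_sum]
    apply Finset.sum_congr rfl
    intro j _
    have hC : (C (-N) : Polynomial (ZMod p)) * C t = 1 := by
      rw [← map_mul, mul_comm (-N) t, htN, map_one]
    calc C (-N) * (X * (C t * g j)) = (C (-N) * C t) * (X * g j) := by ring
      _ = X * g j := by rw [hC, one_mul]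
  -- Step B : RHS
  have stepB : (∑ k ∈ Icc 1 m, bellPoly (ZMod p) k * X * C (((-N - 1)^k)⁻¹))
        - X * ∑ l ∈ Icc 1 m, C (((-1 : ZMod p)^l)⁻¹) * bellPoly (ZMod p) l
      = X * ∑ k ∈ Icc 1 m, g k := by
    rw [Finset.mul_sum, Finset.mul_sum, ← Finset.sum_sub_distrib]
    apply Finset.sum_congr rfl
    intro k _
    have hinv1 : ((-1 : ZMod p)^k)⁻¹ = (-1 : ZMod p)^k := by
      rw [← inv_pow, inv_neg, inv_one]
    rw [hinv1, ← inv_pow, hg]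
    simp only [map_sub]
    ring
  -- Step C : the two sums agree
  have stepC : ∑ j ∈ range m, g j = ∑ k ∈ Icc 1 m, g k := by
    have hg0 : g 0 = 0 := by
      simp [hg]
    have hgm : g m = 0 := by
      rw [hg]
      simp only [hs_pred, hneg1_pred, sub_self, map_zero, zero_mul]
    have hms : m = (m - 1) + 1 := by omega
    have eL : ∑ j ∈ range m, g j = ∑ i ∈ range (m-1), g (i+1) := by
      rw [hms, Finset.sum_range_succ' g, ← hms, hg0, add_zero]
    have eR : ∑ k ∈ Icc 1 m, g k = ∑ i ∈ range (m-1), g (1+i) := by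
      rw [hms, Finset.sum_Icc_succ_top (by omega), ← hms, hgm, add_zero,
        ← Finset.Ico_add_one_right_eq_Icc, Finset.sum_Ico_eq_sum_range]
      simp [Nat.succ_sub_one]
    rw [eL, eR]
    apply Finset.sum_congr rfl
    intro i _
    rw [add_comm]
  rw [stepA, stepB, stepC]


open Polynomial in
/-- The inductive step relation: for a prime `p` and `a, n ≥ 1` with `p ∤ n`, `p ∤ n+1`,
`-n·∑_{k=1}^{p^a-1} B_k(x)/(-n)^k ≡
  ∑_{k=1}^{p^a-1} B_k(x)·x/(-n-1)^k - x·∑_{l=1}^{p^a-1} B_l(x)/(-1)^l` mod `p·ℤ_p[x]`. -/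
theorem inductive_step (p : ℕ) [Fact p.Prime] (a n : ℕ) (ha : 0 < a) (hn : 0 < n)
    (hpn : ¬ p ∣ n) (hpn1 : ¬ p ∣ (n + 1)) :
    (p : Polynomial ℤ_[p]) ∣
      Polynomial.C (-(n : ℤ_[p])) *
          (∑ k ∈ Finset.Icc 1 (p ^ a - 1),
            Polynomial.C (Ring.inverse ((-(n : ℤ_[p])) ^ k)) * bellPoly ℤ_[p] k) -
        ((∑ k ∈ Finset.Icc 1 (p ^ a - 1),
            bellPoly ℤ_[p] k * X * Polynomial.C (Ring.inverse ((-(n : ℤ_[p]) - 1) ^ k))) -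
          X * ∑ l ∈ Finset.Icc 1 (p ^ a - 1),
            Polynomial.C (Ring.inverse ((-1 : ℤ_[p]) ^ l)) * bellPoly ℤ_[p] l) := by
  set f := (PadicInt.toZMod : ℤ_[p] →+* ZMod p) with hf
  have hker : ∀ z : ℤ_[p], f z = 0 ↔ (p : ℤ_[p]) ∣ z := by
    intro z
    rw [← RingHom.mem_ker, PadicInt.ker_toZMod, PadicInt.maximalIdeal_eq_span_p,
      Ideal.mem_span_singleton]
  have hunit : ∀ z : ℤ_[p], f z ≠ 0 → IsUnit z := by
    intro z hz
    by_contra h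
    rw [PadicInt.not_isUnit_iff, PadicInt.norm_lt_one_iff_dvd] at h
    exact hz ((hker z).2 h)
  have hmapinv : ∀ u : ℤ_[p], IsUnit u → f (Ring.inverse u) = (f u)⁻¹ := by
    intro u hu
    obtain ⟨v, rfl⟩ := hu
    rw [Ring.inverse_unit]
    apply eq_inv_of_mul_eq_one_left
    rw [← map_mul]
    simp
  have hbell : ∀ k, (bellPoly ℤ_[p] k).map f = bellPoly (ZMod p) k := by
    intro k
    simp [bellPoly, Polynomial.map_sum, Polynomial.map_mul, Polynomial.map_pow,
      Polynomial.map_C, map_natCast, Polynomial.map_X]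
  set N : ZMod p := (n : ZMod p) with hNdef
  have hN : N ≠ 0 := by
    intro h
    exact hpn ((ZMod.natCast_eq_zero_iff n p).1 h)
  have hN1 : N + 1 ≠ 0 := by
    intro h
    apply hpn1
    rw [← ZMod.natCast_eq_zero_iff]
    push_cast
    exact h
  have hfn : f (-(n : ℤ_[p])) = -N := by simp [hNdef]
  have hfn1 : f (-(n : ℤ_[p]) - 1) = -N - 1 := by simp [hNdef]
  have hfm1 : f (-1 : ℤ_[p]) = -1 := by simp
  have hNneg : (-N : ZMod p) ≠ 0 := neg_ne_zero.2 hN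
  have hN1neg : (-N - 1 : ZMod p) ≠ 0 := fun h => hN1 (by linear_combination -h)
  have hu1 : IsUnit (-(n : ℤ_[p])) := hunit _ (by rw [hfn]; exact hNneg)
  have hu2 : IsUnit (-(n : ℤ_[p]) - 1) := hunit _ (by rw [hfn1]; exact hN1neg)
  have hu3 : IsUnit (-1 : ℤ_[p]) := isUnit_one.neg
  -- map the big polynomial
  have hmap : (Polynomial.C (-(n : ℤ_[p])) *
          (∑ k ∈ Finset.Icc 1 (p ^ a - 1),
            Polynomial.C (Ring.inverse ((-(n : ℤ_[p])) ^ k)) * bellPoly ℤ_[p] k) -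
        ((∑ k ∈ Finset.Icc 1 (p ^ a - 1),
            bellPoly ℤ_[p] k * X * Polynomial.C (Ring.inverse ((-(n : ℤ_[p]) - 1) ^ k))) -
          X * ∑ l ∈ Finset.Icc 1 (p ^ a - 1),
            Polynomial.C (Ring.inverse ((-1 : ℤ_[p]) ^ l)) * bellPoly ℤ_[p] l)).map f
      = 0 := by
    rw [Polynomial.map_sub, Polynomial.map_mul, Polynomial.map_sub, Polynomial.map_mul,
      Polynomial.map_sum, Polynomial.map_sum, Polynomial.map_sum, Polynomial.map_C,
      Polynomial.map_X, hfn]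
    have e1 : ∀ k ∈ Finset.Icc 1 (p^a - 1),
        (Polynomial.C (Ring.inverse ((-(n : ℤ_[p])) ^ k)) * bellPoly ℤ_[p] k).map f
          = Polynomial.C (((-N)^k)⁻¹) * bellPoly (ZMod p) k := by
      intro k _
      rw [Polynomial.map_mul, Polynomial.map_C, hbell, hmapinv _ (hu1.pow k), map_pow, hfn]
    have e2 : ∀ k ∈ Finset.Icc 1 (p^a - 1),
        (bellPoly ℤ_[p] k * X * Polynomial.C (Ring.inverse ((-(n : ℤ_[p]) - 1) ^ k))).map f
          = bellPoly (ZMod p) k * X * Polynomial.C (((-N - 1)^k)⁻¹) := by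
      intro k _
      rw [Polynomial.map_mul, Polynomial.map_mul, Polynomial.map_C, Polynomial.map_X,
        hbell, hmapinv _ (hu2.pow k), map_pow, hfn1]
    have e3 : ∀ l ∈ Finset.Icc 1 (p^a - 1),
        (Polynomial.C (Ring.inverse ((-1 : ℤ_[p]) ^ l)) * bellPoly ℤ_[p] l).map f
          = Polynomial.C (((-1 : ZMod p)^l)⁻¹) * bellPoly (ZMod p) l := by
      intro l _
      rw [Polynomial.map_mul, Polynomial.map_C, hbell, hmapinv _ (hu3.pow l), map_pow, hfm1]
    rw [Finset.sum_congr rfl e1, Finset.sum_congr rfl e2, Finset.sum_congr rfl e3]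
    rw [sub_eq_zero]
    exact main_zmod p a ha N hN hN1
  rw [show ((p : ℕ) : Polynomial ℤ_[p]) = Polynomial.C ((p : ℕ) : ℤ_[p]) from
    (map_natCast Polynomial.C p).symm, Polynomial.C_dvd_iff_dvd_coeff]
  intro i
  rw [← hker]
  have := congrArg (fun q => Polynomial.coeff q i) hmap
  simp only [Polynomial.coeff_map, Polynomial.coeff_zero] at this
  exact this
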